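/- Let F be the absolutely free representation on X = X^(1) ∪ X^(2), F_Θ = F/Id_Θ(X) the relatively free representation of a variety Θ defined by identities f·x^(2) = 0 with f polyhomogeneous with integer coefficients, and let s̃_F : F → F*_W be the isomorphism fixing X determined by the system of words W with parameters a ∈ k^*, φ ∈ Aut(k). Then s̃_F maps the fully invariant congruence Id_Θ(X) into itself — specifically s̃_F(f x^(2)) = a^{deg f} · f x^(2) for polyhomogeneous f with integer coefficients — and hence induces an isomorphism s_{F_Θ} : F_Θ → (F_Θ)*_W fixing the generators. -/

import Mathlib

attribute [local instance 100] LieRing.ofAssociativeRing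

/-- The action of the free Lie algebra `L(X¹)` on the sort-2 part
`M = ⊕_{y ∈ X²} A(X¹)·y` of the absolutely free representation, `l ∘ v = ι(l)v` via the
canonical embedding into the free associative algebra. -/
noncomputable def freeRepAction (k : Type*) [Field k] (X₁ X₂ : Type*) :
    FreeLieAlgebra k X₁ →ₗ⁅k⁆ Module.End k (X₂ →₀ FreeAlgebra k X₁) :=
  (Algebra.lsmul k k (X₂ →₀ FreeAlgebra k X₁) :
      FreeAlgebra k X₁ →ₐ[k] Module.End k (X₂ →₀ FreeAlgebra k X₁)).toLieHom.comp
    (FreeLieAlgebra.lift k (FreeAlgebra.ι k))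

/-- Let `F` be the absolutely free representation on `X = X¹ ∪ X²` and let
`s̃_F = (s₁, s₂) : F → F*_W` be a bijection fixing the generators which is an isomorphism
onto `F` equipped with the verbal operations determined by `a ∈ k^*` and `φ ∈ Aut(k)`
(`w_{[,]} = a[x₁,x₂]`, `w_∘ = a(x₁ ∘ x₂)`, `w_λ = φ(λ)x` in both sorts, additive operations
unchanged).  Then `s̃_F` multiplies every element `f·x⁽²⁾` of the congruence `Id_Θ(X)`, with
`f` polyhomogeneous of multidegree `μ` with integer coefficients, by `a^{deg f}`:
`s̃_F(f x⁽²⁾) = a^{deg f}·(f x⁽²⁾)` — hence it maps `Id_Θ(X)` into itself and induces an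
isomorphism `s_{F_Θ} : F_Θ → (F_Θ)*_W` fixing the generators. -/
theorem stmt_15 (k : Type*) [Field k] [CharZero k] (X₁ X₂ : Type*)
    (a : k) (ha : a ≠ 0) (φ : k ≃+* k)
    (s₁ : FreeLieAlgebra k X₁ → FreeLieAlgebra k X₁)
    (s₂ : (X₂ →₀ FreeAlgebra k X₁) → (X₂ →₀ FreeAlgebra k X₁))
    (hs₁bij : Function.Bijective s₁) (hs₂bij : Function.Bijective s₂)
    -- `s̃_F` fixes the generators:
    (hgen₁ : ∀ x : X₁, s₁ (FreeLieAlgebra.of k x) = FreeLieAlgebra.of k x)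
    (hgen₂ : ∀ y : X₂, s₂ (Finsupp.single y 1) = Finsupp.single y 1)
    -- `s̃_F : F → F*_W` is an isomorphism onto the verbal operations:
    (hadd₁ : ∀ u v, s₁ (u + v) = s₁ u + s₁ v)
    (hadd₂ : ∀ u v, s₂ (u + v) = s₂ u + s₂ v)
    (hsmul₁ : ∀ (c : k) (l), s₁ (c • l) = φ c • s₁ l)
    (hsmul₂ : ∀ (c : k) (v), s₂ (c • v) = φ c • s₂ v)
    (hbracket : ∀ u v, s₁ ⁅u, v⁆ = a • ⁅s₁ u, s₁ v⁆)
    (hact : ∀ l v, s₂ (freeRepAction k X₁ X₂ l v) =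
      a • freeRepAction k X₁ X₂ (s₁ l) (s₂ v)) :
    -- conclusion: `s̃_F (f x⁽²⁾) = a^{deg f} · f x⁽²⁾` for every polyhomogeneous `f` of
    -- multidegree `μ` with integer coefficients
    ∀ (μ : Multiset X₁) (f : FreeAlgebra k X₁),
      f ∈ Submodule.span ℤ {x : FreeAlgebra k X₁ |
          ∃ w : List X₁, (↑w : Multiset X₁) = μ ∧ x = (w.map (FreeAlgebra.ι k)).prod} →
      ∀ y : X₂, s₂ (Finsupp.single y f) = a ^ Multiset.card μ • Finsupp.single y f := by
  -- `s₂` as an additive monoid hom, so it commutes with `ℤ`-scalars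
  set S₂ : (X₂ →₀ FreeAlgebra k X₁) →+ (X₂ →₀ FreeAlgebra k X₁) :=
    AddMonoidHom.mk' s₂ hadd₂ with hS₂
  have hs₂ : ∀ v, s₂ v = S₂ v := fun v => rfl
  -- the action of a generator is left multiplication
  have hactgen : ∀ (x : X₁) (y : X₂) (m : FreeAlgebra k X₁),
      freeRepAction k X₁ X₂ (FreeLieAlgebra.of k x) (Finsupp.single y m)
        = Finsupp.single y (FreeAlgebra.ι k x * m) := by
    intro x y m
    show (Algebra.lsmul k k (X₂ →₀ FreeAlgebra k X₁)
        ((FreeLieAlgebra.lift k (FreeAlgebra.ι k)) (FreeLieAlgebra.of k x)))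
        (Finsupp.single y m) = _
    simp [Finsupp.smul_single, smul_eq_mul]
  -- the key computation for monomials
  have hmono : ∀ (w : List X₁) (y : X₂),
      s₂ (Finsupp.single y (w.map (FreeAlgebra.ι k)).prod)
        = a ^ w.length • Finsupp.single y (w.map (FreeAlgebra.ι k)).prod := by
    intro w
    induction w with
    | nil => intro y; simpa using hgen₂ y
    | cons x w ih =>
      intro y
      have h1 : Finsupp.single y ((List.map (FreeAlgebra.ι k) (x :: w)).prod)
          = freeRepAction k X₁ X₂ (FreeLieAlgebra.of k x)
              (Finsupp.single y (List.map (FreeAlgebra.ι k) w).prod) := by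
        rw [hactgen]; simp
      rw [h1, hact, hgen₁, ih, map_smul, hactgen]
      rw [smul_smul, List.length_cons, pow_succ']
  intro μ f hf y
  induction hf using Submodule.span_induction with
  | mem x hx =>
    obtain ⟨w, hw, rfl⟩ := hx
    have : Multiset.card μ = w.length := by rw [← hw]; simp
    rw [this]; exact hmono w y
  | zero => simp [hs₂, Finsupp.single_zero]
  | add u v _ _ hu hv =>
    rw [Finsupp.single_add, hadd₂, hu, hv, smul_add]
  | smul n u _ hu =>
    have h1 : Finsupp.single y (n • u) = n • Finsupp.single y u := by
      simp [Finsupp.smul_single]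
    rw [h1, hs₂, map_zsmul, ← hs₂, hu, smul_comm]
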